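/- Let μ > 0 and h ∈ ℝ, and let H̃(Q,P) = (Q₁² + μQ₂²)·((P₁² + P₂²) − 2h)²/4 on ℝ² × ℝ². Let (Q,P) : J → ℝ² × ℝ² be a C² curve on an open interval J solving Hamilton's equations for H̃, and assume P₁(s)² + P₂(s)² ≠ 2h for all s ∈ J. Then the curve x(s) = (x₁(s), x₂(s)) := (P₁(s), P₂(s)) satisfies the Euler–Lagrange equations of the Lagrangian L(x, ẋ) = (ẋ₁² + ẋ₂²/μ)/((x₁² + x₂² − 2h)²), namely: d/ds [ 2x₁'(s)/((x₁(s)² + x₂(s)² − 2h)²) ] = −4x₁(s)·(x₁'(s)² + x₂'(s)²/μ)/((x₁(s)² + x₂(s)² − 2h)³) and d/ds [ 2x₂'(s)/(μ(x₁(s)² + x₂(s)² − 2h)²) ] = −4x₂(s)·(x₁'(s)² + x₂'(s)²/μ)/((x₁(s)² + x₂(s)² − 2h)³) for all s ∈ J. In other words, P(s) is a geodesic of the Riemannian metric g = (2/(x² + y² − 2h)²)·diag(1, 1/μ) on the region where x² + y² ≠ 2h. -/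

import Mathlib

/-- A curve `(q, p)` on the set `I ⊆ ℝ` solves Hamilton's equations for the
Hamiltonian `K : ℝ² × ℝ² → ℝ` (with `ℝ²` modelled by `ℝ × ℝ`):
`qᵢ' = ∂K/∂pᵢ` and `pᵢ' = −∂K/∂qᵢ` on `I`, `i = 1, 2`. -/
def IsHamSol2 (K : (ℝ × ℝ) × (ℝ × ℝ) → ℝ) (q p : ℝ → ℝ × ℝ) (I : Set ℝ) : Prop :=
  ∀ t ∈ I,
    HasDerivAt (fun t' => (q t').1) (fderiv ℝ K (q t, p t) (((0, 0), (1, 0)))) t ∧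
    HasDerivAt (fun t' => (q t').2) (fderiv ℝ K (q t, p t) (((0, 0), (0, 1)))) t ∧
    HasDerivAt (fun t' => (p t').1) (-(fderiv ℝ K (q t, p t) (((1, 0), (0, 0))))) t ∧
    HasDerivAt (fun t' => (p t').2) (-(fderiv ℝ K (q t, p t) (((0, 1), (0, 0))))) t

lemma ham_fderiv (μ h : ℝ) (z v : (ℝ × ℝ) × (ℝ × ℝ)) :
    fderiv ℝ (fun z : (ℝ × ℝ) × (ℝ × ℝ) => (z.1.1 ^ 2 + μ * z.1.2 ^ 2)
        * ((z.2.1 ^ 2 + z.2.2 ^ 2) - 2 * h) ^ 2 / 4) z v =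
      ((2*z.1.1*v.1.1 + μ*(2*z.1.2*v.1.2)) * ((z.2.1^2+z.2.2^2) - 2*h)^2
      + (z.1.1^2 + μ*z.1.2^2) * (2*((z.2.1^2+z.2.2^2)-2*h)*(2*z.2.1*v.2.1 + 2*z.2.2*v.2.2)))/4 := by
  set H : (ℝ × ℝ) × (ℝ × ℝ) → ℝ := fun z => (z.1.1 ^ 2 + μ * z.1.2 ^ 2)
        * ((z.2.1 ^ 2 + z.2.2 ^ 2) - 2 * h) ^ 2 / 4 with hH
  have hdiff : Differentiable ℝ H := by
    rw [hH]; fun_prop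
  have hline : HasDerivAt (fun t : ℝ => z + t • v) v 0 := by
    simpa using ((hasDerivAt_id (0:ℝ)).smul_const v).const_add z
  have h1 : HasDerivAt (fun t : ℝ => H (z + t • v)) (fderiv ℝ H z v) 0 := by
    have := ((hdiff (z + (0:ℝ) • v)).hasFDerivAt).comp_hasDerivAt 0 hline
    simp only [zero_smul, add_zero] at this
    exact this
  have e11 : HasDerivAt (fun t : ℝ => z.1.1 + t * v.1.1) v.1.1 0 :=
    by simpa using ((hasDerivAt_id (0:ℝ)).mul_const v.1.1).const_add z.1.1
  have e12 : HasDerivAt (fun t : ℝ => z.1.2 + t * v.1.2) v.1.2 0 :=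
    by simpa using ((hasDerivAt_id (0:ℝ)).mul_const v.1.2).const_add z.1.2
  have e21 : HasDerivAt (fun t : ℝ => z.2.1 + t * v.2.1) v.2.1 0 :=
    by simpa using ((hasDerivAt_id (0:ℝ)).mul_const v.2.1).const_add z.2.1
  have e22 : HasDerivAt (fun t : ℝ => z.2.2 + t * v.2.2) v.2.2 0 :=
    by simpa using ((hasDerivAt_id (0:ℝ)).mul_const v.2.2).const_add z.2.2
  have hA : HasDerivAt (fun t : ℝ => (z.1.1 + t * v.1.1)^2 + μ*(z.1.2 + t * v.1.2)^2)
      (2*z.1.1*v.1.1 + μ*(2*z.1.2*v.1.2)) 0 := by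
    have := (e11.pow 2).add ((e12.pow 2).const_mul μ)
    refine this.congr_deriv ?_
    simp
  have hB : HasDerivAt (fun t : ℝ => ((z.2.1 + t*v.2.1)^2 + (z.2.2 + t*v.2.2)^2 - 2*h)^2)
      (2*((z.2.1^2+z.2.2^2)-2*h)*(2*z.2.1*v.2.1 + 2*z.2.2*v.2.2)) 0 := by
    have := (((e21.pow 2).add (e22.pow 2)).sub_const (2*h)).pow 2
    refine this.congr_deriv ?_
    simp
  have h2 : HasDerivAt (fun t : ℝ => H (z + t • v))
      (((2*z.1.1*v.1.1 + μ*(2*z.1.2*v.1.2)) * ((z.2.1^2+z.2.2^2) - 2*h)^2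
      + (z.1.1^2 + μ*z.1.2^2) * (2*((z.2.1^2+z.2.2^2)-2*h)*(2*z.2.1*v.2.1 + 2*z.2.2*v.2.2)))/4) 0 := by
    have := ((hA.mul hB).div_const 4)
    have h3 : (fun t : ℝ => H (z + t • v)) = fun t : ℝ =>
        ((z.1.1 + t * v.1.1)^2 + μ*(z.1.2 + t * v.1.2)^2) *
        ((z.2.1 + t*v.2.1)^2 + (z.2.2 + t*v.2.2)^2 - 2*h)^2 / 4 := by
      funext t; simp [hH, Prod.fst_add, Prod.snd_add, Prod.smul_fst, Prod.smul_snd, smul_eq_mul]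

    rw [h3]
    refine this.congr_deriv ?_
    simp
  exact h1.unique h2

/-- **The momenta of the Hamiltonian flow of
`H̃(Q,P) = (Q₁² + μQ₂²)((P₁² + P₂²) − 2h)²/4` satisfy the Euler–Lagrange
equations of the Lagrangian
`L(x, ẋ) = (ẋ₁² + ẋ₂²/μ)/((x₁² + x₂² − 2h)²)`,**
i.e. `x(s) := P(s)` is a geodesic of the metric
`g = (2/(x² + y² − 2h)²)·diag(1, 1/μ)` on the region `x² + y² ≠ 2h`. -/
theorem akp_momenta_satisfy_euler_lagrange
    (μ h : ℝ) (hμ : 0 < μ)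
    (J : Set ℝ) (hJ : IsOpen J) (hJconn : J.OrdConnected)
    (Q P : ℝ → ℝ × ℝ)
    (hC2 : ContDiffOn ℝ 2 (fun s => (Q s, P s)) J)
    (hsol : IsHamSol2
      (fun z => (z.1.1 ^ 2 + μ * z.1.2 ^ 2)
        * ((z.2.1 ^ 2 + z.2.2 ^ 2) - 2 * h) ^ 2 / 4) Q P J)
    (hP : ∀ s ∈ J, (P s).1 ^ 2 + (P s).2 ^ 2 ≠ 2 * h) :
    ∀ s ∈ J,
      HasDerivAt
        (fun s' => 2 * deriv (fun u => (P u).1) s'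
          / ((P s').1 ^ 2 + (P s').2 ^ 2 - 2 * h) ^ 2)
        (-4 * (P s).1
          * ((deriv (fun u => (P u).1) s) ^ 2 + (deriv (fun u => (P u).2) s) ^ 2 / μ)
          / ((P s).1 ^ 2 + (P s).2 ^ 2 - 2 * h) ^ 3) s ∧
      HasDerivAt
        (fun s' => 2 * deriv (fun u => (P u).2) s'
          / (μ * ((P s').1 ^ 2 + (P s').2 ^ 2 - 2 * h) ^ 2))
        (-4 * (P s).2
          * ((deriv (fun u => (P u).1) s) ^ 2 + (deriv (fun u => (P u).2) s) ^ 2 / μ)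
          / ((P s).1 ^ 2 + (P s).2 ^ 2 - 2 * h) ^ 3) s := by
  have hμ' : μ ≠ 0 := ne_of_gt hμ
  set R : ℝ → ℝ := fun u => (P u).1 ^ 2 + (P u).2 ^ 2 - 2 * h with hR
  have hRne : ∀ u ∈ J, R u ≠ 0 := fun u hu => sub_ne_zero.mpr (hP u hu)
  -- derivatives of P from Hamilton's equations
  have hd1 : ∀ u ∈ J, HasDerivAt (fun u' => (P u').1) (-((Q u).1 * R u ^ 2 / 2)) u := by
    intro u hu
    have := (hsol u hu).2.2.1
    rw [ham_fderiv] at this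
    convert this using 1
    simp [hR]; ring
  have hd2 : ∀ u ∈ J, HasDerivAt (fun u' => (P u').2) (-(μ * (Q u).2 * R u ^ 2 / 2)) u := by
    intro u hu
    have := (hsol u hu).2.2.2
    rw [ham_fderiv] at this
    convert this using 1
    simp [hR]; ring
  have hD1 : ∀ u ∈ J, deriv (fun u' => (P u').1) u = -((Q u).1 * R u ^ 2 / 2) :=
    fun u hu => (hd1 u hu).deriv
  have hD2 : ∀ u ∈ J, deriv (fun u' => (P u').2) u = -(μ * (Q u).2 * R u ^ 2 / 2) :=
    fun u hu => (hd2 u hu).deriv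
  intro s hs
  have hQ1 := (hsol s hs).1
  have hQ2 := (hsol s hs).2.1
  rw [ham_fderiv] at hQ1 hQ2
  have hmem : J ∈ nhds s := hJ.mem_nhds hs
  constructor
  · have heq : (fun s' => 2 * deriv (fun u => (P u).1) s'
          / ((P s').1 ^ 2 + (P s').2 ^ 2 - 2 * h) ^ 2) =ᶠ[nhds s] fun s' => -(Q s').1 := by
      filter_upwards [hmem] with u hu
      rw [hD1 u hu]
      have hne := hRne u hu
      simp only [hR] at hne ⊢
      field_simp
    have key := hQ1.neg.congr_of_eventuallyEq heq
    refine key.congr_deriv ?_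
    rw [hD1 s hs, hD2 s hs]
    have := hRne s hs
    simp only [hR] at this ⊢
    field_simp
    ring
  · have heq : (fun s' => 2 * deriv (fun u => (P u).2) s'
          / (μ * ((P s').1 ^ 2 + (P s').2 ^ 2 - 2 * h) ^ 2)) =ᶠ[nhds s] fun s' => -(Q s').2 := by
      filter_upwards [hmem] with u hu
      rw [hD2 u hu]
      have hne := hRne u hu
      simp only [hR] at hne ⊢
      field_simp
    have key := hQ2.neg.congr_of_eventuallyEq heq
    refine key.congr_deriv ?_
    rw [hD1 s hs, hD2 s hs]
    have := hRne s hs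
    simp only [hR] at this ⊢
    field_simp
    ring
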